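/- Let h₁, f₂ be vectors in ℝ^{r₁}, and h₂, f₁ vectors in ℝ^{r₂}, and let P₁, P₂ > 0. Suppose there exist an r₁×r₂ real matrix A₁, an r₂×r₁ real matrix A₂, and symmetric positive definite matrices Σ₁ (r₂×r₂), Σ₂ (r₁×r₁) such that: A₁ᵀ·(I + P₂·f₂f₂ᵀ)⁻¹·h₁ = f₁; A₂ᵀ·(I + P₁·f₁f₁ᵀ)⁻¹·h₂ = f₂; Σ₁ = I − A₂Σ₂⁻¹A₂ᵀ; Σ₂ = I − A₁Σ₁⁻¹A₁ᵀ; Σ₁ − A₁ᵀA₁ is positive definite; and Σ₂ − A₂ᵀA₂ is positive definite. Define, for scalars S₁, S₂ ≥ 0, R_su(S₁,S₂) = ½·log det( I + S₁·[h₁; f₁]·[h₁; f₁]ᵀ·(E₁ + S₂·[f₂; 0]·[f₂; 0]ᵀ)⁻¹ ) + ½·log det( I + S₂·[h₂; f₂]·[h₂; f₂]ᵀ·(E₂ + S₁·[f₁; 0]·[f₁; 0]ᵀ)⁻¹ ), where Eᵢ = fromBlocks(I, Aᵢ; Aᵢᵀ, Σᵢ), [x; y] denotes the concatenated column vector, and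 in [f₂; 0] the zero block has length r₂ while in [f₁; 0] it has length r₁. Then for all S₁ ∈ [0, P₁] and S₂ ∈ [0, P₂], R_su(S₁, S₂) ≤ R_su(P₁, P₂), and R_su(P₁, P₂) = ½·log det( I + P₁·h₁h₁ᵀ·(I + P₂·f₂f₂ᵀ)⁻¹ ) + ½·log det( I + P₂·h₂h₂ᵀ·(I + P₁·f₁f₁ᵀ)⁻¹ ). -/

import Mathlib

open Matrix

set_option linter.unusedSectionVars false
set_option maxHeartbeats 2000000

namespace Stmt17Aux

variable {n m k : Type*} [Fintype n] [Fintype m] [Fintype k]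

lemma vecMulVec_mulVec (a : n → ℝ) (b : m → ℝ) (x : m → ℝ) :
    vecMulVec a b *ᵥ x = (b ⬝ᵥ x) • a := by
  ext i
  simp [vecMulVec_apply, Matrix.mulVec, dotProduct, Finset.mul_sum, mul_assoc,
    Finset.sum_mul, mul_comm, mul_left_comm]

lemma mul_vecMulVec (M : Matrix n m ℝ) (a : m → ℝ) (b : k → ℝ) :
    M * vecMulVec a b = vecMulVec (M *ᵥ a) b := by
  ext i j
  simp [vecMulVec_apply, Matrix.mul_apply, Matrix.mulVec, dotProduct, Finset.sum_mul, mul_assoc]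

lemma vecMulVec_mul (a : n → ℝ) (b : m → ℝ) (M : Matrix m k ℝ) :
    vecMulVec a b * M = vecMulVec a (Mᵀ *ᵥ b) := by
  ext i j
  simp [vecMulVec_apply, Matrix.mul_apply, Matrix.mulVec, dotProduct, Finset.mul_sum, mul_assoc,
    mul_comm, mul_left_comm]

lemma smul_vecMulVec (c : ℝ) (a : n → ℝ) (b : m → ℝ) :
    c • vecMulVec a b = vecMulVec (c • a) b := by
  ext i j
  simp [vecMulVec_apply, mul_assoc]

lemma vecMulVec_sub (a : n → ℝ) (b b' : m → ℝ) :
    vecMulVec a (b - b') = vecMulVec a b - vecMulVec a b' := by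
  ext i j; simp [vecMulVec_apply, mul_sub]

lemma vecMulVec_smul2 (c : ℝ) (a : n → ℝ) (b : m → ℝ) :
    vecMulVec a (c • b) = c • vecMulVec a b := by
  ext i j; simp [vecMulVec_apply]; ring

lemma dot_symm [DecidableEq n] (E : Matrix n n ℝ) (hEs : Eᵀ = E) {u w eu ew : n → ℝ}
    (hu : E *ᵥ eu = u) (hw : E *ᵥ ew = w) : u ⬝ᵥ ew = w ⬝ᵥ eu := by
  rw [← hu, ← hw]
  rw [dotProduct_comm, dotProduct_mulVec, ← mulVec_transpose, hEs, dotProduct_comm,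
    dotProduct_mulVec, ← mulVec_transpose, hEs]

/-- master determinant lemma -/
lemma det_formula [DecidableEq n] (E : Matrix n n ℝ) (hEs : Eᵀ = E) (hE : IsUnit E.det)
    (u w eu ew : n → ℝ) (hu : E *ᵥ eu = u) (hw : E *ᵥ ew = w)
    (S Q : ℝ) (hQ : 1 + Q * (w ⬝ᵥ ew) ≠ 0) :
    (1 + S • vecMulVec u u * (E + Q • vecMulVec w w)⁻¹).det
      = 1 + S * (u ⬝ᵥ eu - Q * (w ⬝ᵥ eu)^2 / (1 + Q * (w ⬝ᵥ ew))) := by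
  have hcross : u ⬝ᵥ ew = w ⬝ᵥ eu := dot_symm E hEs hu hw
  set g := w ⬝ᵥ ew with hgdef
  set β := w ⬝ᵥ eu with hβdef
  set c := Q / (1 + Q * g) with hc
  have hEinvw : E⁻¹ *ᵥ w = ew := by
    rw [← hw, mulVec_mulVec, nonsing_inv_mul E hE, one_mulVec]
  have hEinvu : E⁻¹ *ᵥ u = eu := by
    rw [← hu, mulVec_mulVec, nonsing_inv_mul E hE, one_mulVec]
  have hEinvT : E⁻¹ᵀ = E⁻¹ := by rw [transpose_nonsing_inv, hEs]
  have e1 : E * vecMulVec ew ew = vecMulVec w ew := by rw [mul_vecMulVec, hw]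
  have e2 : vecMulVec w w * E⁻¹ = vecMulVec w ew := by
    rw [vecMulVec_mul, hEinvT, hEinvw]
  have e3 : vecMulVec w w * vecMulVec ew ew = g • vecMulVec w ew := by
    rw [mul_vecMulVec, vecMulVec_mulVec, ← smul_vecMulVec, ← hgdef]
  have hcoef : Q - c - Q * (c * g) = 0 := by
    rw [hc]; field_simp; ring
  have hMN : (E + Q • vecMulVec w w) * (E⁻¹ - c • vecMulVec ew ew) = 1 := by
    rw [Matrix.add_mul, Matrix.mul_sub, Matrix.mul_sub, mul_nonsing_inv E hE,
      Matrix.mul_smul, e1, Matrix.smul_mul, e2, Matrix.smul_mul, Matrix.mul_smul, e3]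
    have hX : ∀ X : Matrix n n ℝ,
        1 - c • X + (Q • X - Q • (c • (g • X))) = 1 + (Q - c - Q * (c * g)) • X := by
      intro X; module
    rw [hX, hcoef, zero_smul, add_zero]
  have hinv : (E + Q • vecMulVec w w)⁻¹ = E⁻¹ - c • vecMulVec ew ew :=
    inv_eq_right_inv hMN
  rw [hinv, Matrix.mul_sub]
  have g1 : S • vecMulVec u u * E⁻¹ = vecMulVec (S • u) eu := by
    rw [Matrix.smul_mul, vecMulVec_mul, hEinvT, hEinvu, smul_vecMulVec]
  have g2 : S • vecMulVec u u * (c • vecMulVec ew ew) = (c * β) • vecMulVec (S • u) ew := by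
    rw [Matrix.smul_mul, Matrix.mul_smul, mul_vecMulVec, vecMulVec_mulVec, hcross]
    ext i j; simp [vecMulVec_apply]; ring
  have comb : vecMulVec (S • u) eu - (c * β) • vecMulVec (S • u) ew
      = vecMulVec (S • u) (eu - (c * β) • ew) := by
    rw [vecMulVec_sub, vecMulVec_smul2]
  rw [g1, g2, comb, vecMulVec_eq Unit, det_one_add_replicateCol_mul_replicateRow]
  have hewu : ew ⬝ᵥ u = β := by rw [dotProduct_comm]; exact hcross
  have heuu : eu ⬝ᵥ u = u ⬝ᵥ eu := dotProduct_comm _ _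
  rw [sub_dotProduct, smul_dotProduct, dotProduct_smul, dotProduct_smul, heuu, hewu, hc]
  field_simp
  have hi : (1 + Q * g) * (1 + Q * g)⁻¹ = 1 := mul_inv_cancel₀ hQ
  linear_combination (-(Q * S * β ^ 2)) * hi

lemma psd_nonneg [DecidableEq n] {M : Matrix n n ℝ} (hM : M.PosSemidef) (x : n → ℝ) :
    0 ≤ x ⬝ᵥ (M *ᵥ x) := by simpa using hM.dotProduct_mulVec_nonneg x

lemma pd_symm [DecidableEq n] {M : Matrix n n ℝ} (hM : M.PosDef) : Mᵀ = M := by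
  have h := hM.isHermitian
  rwa [Matrix.IsHermitian, conjTranspose_eq_transpose_of_trivial] at h

lemma dot_mulVec_symm [DecidableEq n] {M : Matrix n n ℝ} (hs : Mᵀ = M) (a b : n → ℝ) :
    a ⬝ᵥ (M *ᵥ b) = b ⬝ᵥ (M *ᵥ a) := by
  rw [dotProduct_mulVec, ← mulVec_transpose, hs, dotProduct_comm]

lemma cauchy_schwarz [DecidableEq n] {W : Matrix n n ℝ} (hW : W.PosDef) (x y : n → ℝ) :
    (x ⬝ᵥ y)^2 ≤ (x ⬝ᵥ (W⁻¹ *ᵥ x)) * (y ⬝ᵥ (W *ᵥ y)) := by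
  have hs : Wᵀ = W := pd_symm hW
  have hdet : IsUnit W.det := hW.det_pos.ne'.isUnit
  set z := W⁻¹ *ᵥ x with hz
  have hxz : W *ᵥ z = x := by
    rw [hz, mulVec_mulVec, mul_nonsing_inv _ hdet, one_mulVec]
  have hA : x ⬝ᵥ (W⁻¹ *ᵥ x) = z ⬝ᵥ (W *ᵥ z) := by
    rw [← hz, ← hxz, dotProduct_comm]
  have hB : x ⬝ᵥ y = z ⬝ᵥ (W *ᵥ y) := by
    rw [← hxz, dotProduct_comm, dot_mulVec_symm hs]
  rw [hA, hB]
  set A := z ⬝ᵥ (W *ᵥ z) with hAd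
  set B := z ⬝ᵥ (W *ᵥ y) with hBd
  set C := y ⬝ᵥ (W *ᵥ y) with hCd
  have expand : ∀ l : ℝ, 0 ≤ A - 2*l*B + l^2*C := by
    intro l
    have h0 := psd_nonneg hW.posSemidef (z - l • y)
    have hexp : (z - l • y) ⬝ᵥ (W *ᵥ (z - l • y)) = A - 2*l*B + l^2*C := by
      simp only [mulVec_sub, mulVec_smul, sub_dotProduct, dotProduct_sub,
        smul_dotProduct, dotProduct_smul, smul_eq_mul]
      rw [dot_mulVec_symm hs y z]
      simp only [hAd, hBd, hCd]
      ring
    linarith [h0, hexp.ge, hexp.le]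
  by_cases hy : y = 0
  · have hB0 : B = 0 := by simp [hBd, hy]
    have hC0 : C = 0 := by simp [hCd, hy]
    rw [hB0, hC0]; simp
  · have hC : 0 < C := by simpa using hW.dotProduct_mulVec_pos hy
    have h1 := expand (B/C)
    have h2 : A - 2*(B/C)*B + (B/C)^2*C = A - B^2/C := by field_simp; ring
    rw [h2] at h1
    have h3 : B^2/C ≤ A := by linarith
    calc B^2 = (B^2/C)*C := by field_simp
    _ ≤ A*C := by nlinarith

/-- the analytic core: moving one power up to full power increases the product. -/
lemma key_move (a m g t P S Q : ℝ) (hg : 0 ≤ g) (hm : 0 ≤ m) (hag : g ≤ a)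
    (hgm : t^2 ≤ g*m) (hS : 0 ≤ S) (hSP : S ≤ P) (hQ : 0 ≤ Q) :
    (1+S*a)*(1+Q*((m+2*P*t^2+P^2*t^2*g) - S*(t*(1+P*g))^2/(1+S*g))) ≤
    (1+P*a)*(1+Q*((m+2*P*t^2+P^2*t^2*g) - P*(t*(1+P*g))^2/(1+P*g))) := by
  have hP : 0 ≤ P := hS.trans hSP
  have hu : 0 < 1+S*g := by nlinarith
  have hv : 0 < 1+P*g := by nlinarith
  have ha : 0 ≤ a := hg.trans hag
  have hdiff : (1+P*a)*(1+Q*((m+2*P*t^2+P^2*t^2*g) - P*(t*(1+P*g))^2/(1+P*g)))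
      - (1+S*a)*(1+Q*((m+2*P*t^2+P^2*t^2*g) - S*(t*(1+P*g))^2/(1+S*g)))
      = (P-S)*(S*a*(g+Q*(g*m-t^2)) + (a+Q*((a*m-t^2)+P*t^2*(a-g))))/(1+S*g) := by
    field_simp
    ring
  have ham : t^2 ≤ a*m := by nlinarith
  have h1 : 0 ≤ g+Q*(g*m-t^2) := by nlinarith [mul_nonneg hQ (sub_nonneg.2 hgm)]
  have h2 : 0 ≤ a+Q*((a*m-t^2)+P*t^2*(a-g)) := by
    nlinarith [mul_nonneg hQ (sub_nonneg.2 ham),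
      mul_nonneg (mul_nonneg hQ hP) (mul_nonneg (sq_nonneg t) (sub_nonneg.2 hag))]
  have h3 : 0 ≤ (P-S)*(S*a*(g+Q*(g*m-t^2)) + (a+Q*((a*m-t^2)+P*t^2*(a-g))))/(1+S*g) := by
    apply div_nonneg _ hu.le
    apply mul_nonneg (by linarith)
    have := mul_nonneg (mul_nonneg hS ha) h1
    linarith
  linarith [hdiff ▸ h3]

/-- response function is at least its full-power value -/
lemma resp_lb (m g t P S : ℝ) (hg : 0 ≤ g) (hS : 0 ≤ S) (hSP : S ≤ P) :
    m + P*t^2 ≤ (m+2*P*t^2+P^2*t^2*g) - S*(t*(1+P*g))^2/(1+S*g) := by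
  have hP : 0 ≤ P := hS.trans hSP
  have hu : 0 < 1+S*g := by nlinarith
  rw [← sub_nonneg]
  have h : (m+2*P*t^2+P^2*t^2*g) - S*(t*(1+P*g))^2/(1+S*g) - (m + P*t^2)
      = t^2*(1+P*g)*(P-S)/(1+S*g) := by field_simp; ring
  rw [h]
  apply div_nonneg _ hu.le
  apply mul_nonneg (mul_nonneg (sq_nonneg t) (by nlinarith))
  linarith

/-- at full power the response equals the TIN value -/
lemma resp_full (m g t P : ℝ) (h : (1:ℝ)+P*g ≠ 0) :
    (m+2*P*t^2+P^2*t^2*g) - P*(t*(1+P*g))^2/(1+P*g) = m + P*t^2 := by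
  field_simp
  ring

lemma sum_elim_add (a c : n → ℝ) (b d : m → ℝ) :
    Sum.elim a b + Sum.elim c d = Sum.elim (a + c) (b + d) := by
  funext i; cases i <;> simp

lemma sum_elim_smul (r : ℝ) (a : n → ℝ) (b : m → ℝ) :
    r • Sum.elim a b = Sum.elim (r • a) (r • b) := by
  funext i; cases i <;> simp

lemma rank_one_right_inv [DecidableEq n] (c : ℝ) (f : n → ℝ) (h : 1 + c * (f ⬝ᵥ f) ≠ 0) :
    (1 + c • vecMulVec f f) * (1 - (c/(1 + c * (f ⬝ᵥ f))) • vecMulVec f f) = 1 := by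
  set q := f ⬝ᵥ f with hq
  set d := c/(1+c*q) with hd
  have e3 : vecMulVec f f * vecMulVec f f = q • vecMulVec f f := by
    rw [mul_vecMulVec, vecMulVec_mulVec, ← smul_vecMulVec, ← hq]
  rw [Matrix.add_mul, Matrix.mul_sub, Matrix.mul_sub, Matrix.one_mul, Matrix.one_mul,
    Matrix.smul_mul, Matrix.mul_smul, Matrix.smul_mul, e3]
  have hcoef : c - d - c * (d * q) = 0 := by
    rw [hd]; field_simp; ring
  have hX : ∀ X : Matrix n n ℝ,
      1 - d • X + (c • (X * 1) - d • (c • (q • X))) = 1 + (c - d - c * (d * q)) • X := by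
    intro X; rw [Matrix.mul_one]; module
  rw [hX, hcoef, zero_smul, add_zero]

lemma dot_self_nonneg (x : n → ℝ) : 0 ≤ x ⬝ᵥ x :=
  Finset.sum_nonneg fun i _ => mul_self_nonneg _

end Stmt17Aux

open Stmt17Aux

/-- Theorem 5 of the paper (SIMO interference channel, optimization core): under the
stated genie conditions, the genie-aided upper bound `R_su` is maximized at full power
`(P₁, P₂)`, where it equals the treating-interference-as-noise lower bound. -/
theorem stmt17 {r₁ r₂ : ℕ}
    (h₁ f₂ : Fin r₁ → ℝ) (h₂ f₁ : Fin r₂ → ℝ)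
    (P₁ P₂ : ℝ) (hP₁ : 0 < P₁) (hP₂ : 0 < P₂)
    (A₁ : Matrix (Fin r₁) (Fin r₂) ℝ) (A₂ : Matrix (Fin r₂) (Fin r₁) ℝ)
    (Sg₁ : Matrix (Fin r₂) (Fin r₂) ℝ) (Sg₂ : Matrix (Fin r₁) (Fin r₁) ℝ)
    (hSg₁ : Sg₁.PosDef) (hSg₂ : Sg₂.PosDef)
    (hMk₁ : (A₁ᵀ * (1 + P₂ • vecMulVec f₂ f₂)⁻¹) *ᵥ h₁ = f₁)
    (hMk₂ : (A₂ᵀ * (1 + P₁ • vecMulVec f₁ f₁)⁻¹) *ᵥ h₂ = f₂)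
    (hRic₁ : Sg₁ = 1 - A₂ * Sg₂⁻¹ * A₂ᵀ)
    (hRic₂ : Sg₂ = 1 - A₁ * Sg₁⁻¹ * A₁ᵀ)
    (hPD₁ : (Sg₁ - A₁ᵀ * A₁).PosDef)
    (hPD₂ : (Sg₂ - A₂ᵀ * A₂).PosDef)
    (Rsu : ℝ → ℝ → ℝ)
    (hRsu : ∀ S₁ S₂, Rsu S₁ S₂ =
      (1/2) * Real.log
        ((1 + S₁ • vecMulVec (Sum.elim h₁ f₁) (Sum.elim h₁ f₁) *
          (fromBlocks 1 A₁ A₁ᵀ Sg₁ +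
            S₂ • vecMulVec (Sum.elim f₂ (0 : Fin r₂ → ℝ))
              (Sum.elim f₂ (0 : Fin r₂ → ℝ)))⁻¹).det) +
      (1/2) * Real.log
        ((1 + S₂ • vecMulVec (Sum.elim h₂ f₂) (Sum.elim h₂ f₂) *
          (fromBlocks 1 A₂ A₂ᵀ Sg₂ +
            S₁ • vecMulVec (Sum.elim f₁ (0 : Fin r₁ → ℝ))
              (Sum.elim f₁ (0 : Fin r₁ → ℝ)))⁻¹).det)) :
    (∀ S₁ ∈ Set.Icc 0 P₁, ∀ S₂ ∈ Set.Icc 0 P₂, Rsu S₁ S₂ ≤ Rsu P₁ P₂) ∧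
      Rsu P₁ P₂ =
        (1/2) * Real.log
          ((1 + P₁ • vecMulVec h₁ h₁ * (1 + P₂ • vecMulVec f₂ f₂)⁻¹).det) +
        (1/2) * Real.log
          ((1 + P₂ • vecMulVec h₂ h₂ * (1 + P₁ • vecMulVec f₁ f₁)⁻¹).det) := by
  -- basic scalars
  set q₁ := f₂ ⬝ᵥ f₂ with hq₁def
  set q₂ := f₁ ⬝ᵥ f₁ with hq₂def
  have hq₁0 : 0 ≤ q₁ := dot_self_nonneg f₂
  have hq₂0 : 0 ≤ q₂ := dot_self_nonneg f₁
  have hK₂ne : 1 + P₂ * q₁ ≠ 0 := by positivity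
  have hK₁ne : 1 + P₁ * q₂ ≠ 0 := by positivity
  -- noise covariance inverses
  set K₂ := 1 + P₂ • vecMulVec f₂ f₂ with hK₂def
  set K₁ := 1 + P₁ • vecMulVec f₁ f₁ with hK₁def
  have hK₂inv := rank_one_right_inv P₂ f₂ hK₂ne
  have hK₁inv := rank_one_right_inv P₁ f₁ hK₁ne
  have hdetK₂ : IsUnit K₂.det :=
    IsUnit.of_mul_eq_one _ (by rw [← det_mul, hK₂inv, det_one])
  have hdetK₁ : IsUnit K₁.det :=
    IsUnit.of_mul_eq_one _ (by rw [← det_mul, hK₁inv, det_one])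
  set v₁ := K₂⁻¹ *ᵥ h₁ with hv₁def
  set v₂ := K₁⁻¹ *ᵥ h₂ with hv₂def
  have hv₁ : K₂ *ᵥ v₁ = h₁ := by
    rw [hv₁def, mulVec_mulVec, mul_nonsing_inv _ hdetK₂, one_mulVec]
  have hv₂ : K₁ *ᵥ v₂ = h₂ := by
    rw [hv₂def, mulVec_mulVec, mul_nonsing_inv _ hdetK₁, one_mulVec]
  set s := f₂ ⬝ᵥ v₁ with hsdef
  set t := f₁ ⬝ᵥ v₂ with htdef
  have hh₁ : h₁ = v₁ + (P₂*s) • f₂ := by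
    rw [← hv₁, hK₂def, add_mulVec, one_mulVec, smul_mulVec, Stmt17Aux.vecMulVec_mulVec,
      ← hsdef, smul_smul]
  have hh₂ : h₂ = v₂ + (P₁*t) • f₁ := by
    rw [← hv₂, hK₁def, add_mulVec, one_mulVec, smul_mulVec, Stmt17Aux.vecMulVec_mulVec,
      ← htdef, smul_smul]
  have hf₁ : A₁ᵀ *ᵥ v₁ = f₁ := by rw [hv₁def, mulVec_mulVec, hMk₁]
  have hf₂ : A₂ᵀ *ᵥ v₂ = f₂ := by rw [hv₂def, mulVec_mulVec, hMk₂]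
  -- quadratic form scalars
  set g₁ := f₂ ⬝ᵥ (Sg₂⁻¹ *ᵥ f₂) with hg₁def
  set g₂ := f₁ ⬝ᵥ (Sg₁⁻¹ *ᵥ f₁) with hg₂def
  set m₁ := v₁ ⬝ᵥ v₁ with hm₁def
  set m₂ := v₂ ⬝ᵥ v₂ with hm₂def
  have hg₁0 : 0 ≤ g₁ := psd_nonneg hSg₂.inv.posSemidef f₂
  have hg₂0 : 0 ≤ g₂ := psd_nonneg hSg₁.inv.posSemidef f₁
  have hm₁0 : 0 ≤ m₁ := dot_self_nonneg v₁
  have hm₂0 : 0 ≤ m₂ := dot_self_nonneg v₂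
  have hdetSg₁ : IsUnit Sg₁.det := hSg₁.det_pos.ne'.isUnit
  have hdetSg₂ : IsUnit Sg₂.det := hSg₂.det_pos.ne'.isUnit
  -- m₁ - g₂ = v₁ᵀ Sg₂ v₁ ≥ 0
  have hquad₁ : v₁ ⬝ᵥ (Sg₂ *ᵥ v₁) = m₁ - g₂ := by
    rw [hRic₂, sub_mulVec, one_mulVec, dotProduct_sub, ← hm₁def]
    congr 1
    rw [show (A₁ * Sg₁⁻¹ * A₁ᵀ) *ᵥ v₁ = A₁ *ᵥ (Sg₁⁻¹ *ᵥ (A₁ᵀ *ᵥ v₁)) by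
      conv_rhs => rw [mulVec_mulVec, mulVec_mulVec], hf₁, dotProduct_mulVec,
      ← mulVec_transpose, hf₁]
  have hquad₂ : v₂ ⬝ᵥ (Sg₁ *ᵥ v₂) = m₂ - g₁ := by
    rw [hRic₁, sub_mulVec, one_mulVec, dotProduct_sub, ← hm₂def]
    congr 1
    rw [show (A₂ * Sg₂⁻¹ * A₂ᵀ) *ᵥ v₂ = A₂ *ᵥ (Sg₂⁻¹ *ᵥ (A₂ᵀ *ᵥ v₂)) by
      conv_rhs => rw [mulVec_mulVec, mulVec_mulVec], hf₂, dotProduct_mulVec,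
      ← mulVec_transpose, hf₂]
  have hm₁g₂ : g₂ ≤ m₁ := by
    have := psd_nonneg hSg₂.posSemidef v₁; rw [hquad₁] at this; linarith
  have hm₂g₁ : g₁ ≤ m₂ := by
    have := psd_nonneg hSg₁.posSemidef v₂; rw [hquad₂] at this; linarith
  -- Cauchy-Schwarz facts
  have hCSt : t^2 ≤ g₂ * m₂ := by
    have h := cauchy_schwarz hSg₁ f₁ v₂
    rw [hquad₂, ← hg₂def, ← htdef] at h
    have h2 : g₂ * (m₂ - g₁) ≤ g₂ * m₂ :=
      mul_le_mul_of_nonneg_left (by linarith) hg₂0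
    linarith
  have hCSs : s^2 ≤ g₁ * m₁ := by
    have h := cauchy_schwarz hSg₂ f₂ v₁
    rw [hquad₁, ← hg₁def, ← hsdef] at h
    have h2 : g₁ * (m₁ - g₂) ≤ g₁ * m₁ :=
      mul_le_mul_of_nonneg_left (by linarith) hg₁0
    linarith
  -- E matrices
  set E₁ := fromBlocks (1 : Matrix (Fin r₁) (Fin r₁) ℝ) A₁ A₁ᵀ Sg₁ with hE₁def
  set E₂ := fromBlocks (1 : Matrix (Fin r₂) (Fin r₂) ℝ) A₂ A₂ᵀ Sg₂ with hE₂def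
  have hE₁s : E₁ᵀ = E₁ := by
    rw [hE₁def, fromBlocks_transpose, transpose_one, transpose_transpose, pd_symm hSg₁]
  have hE₂s : E₂ᵀ = E₂ := by
    rw [hE₂def, fromBlocks_transpose, transpose_one, transpose_transpose, pd_symm hSg₂]
  have hdetE₁ : IsUnit E₁.det := by
    haveI : Invertible (1 : Matrix (Fin r₁) (Fin r₁) ℝ) := invertibleOne
    haveI i1 : Invertible (Sg₁ - A₁ᵀ * A₁) :=
      Matrix.invertibleOfIsUnitDet _ hPD₁.det_pos.ne'.isUnit
    haveI i1' : Invertible (Sg₁ - A₁ᵀ * ⅟(1 : Matrix (Fin r₁) (Fin r₁) ℝ) * A₁) := by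
      have hEq : Sg₁ - A₁ᵀ * ⅟(1 : Matrix (Fin r₁) (Fin r₁) ℝ) * A₁ = Sg₁ - A₁ᵀ * A₁ := by
        rw [invOf_one, Matrix.mul_one]
      rw [hEq]; exact i1
    haveI := fromBlocks₁₁Invertible (1 : Matrix (Fin r₁) (Fin r₁) ℝ) A₁ A₁ᵀ Sg₁
    exact isUnit_det_of_invertible E₁
  have hdetE₂ : IsUnit E₂.det := by
    haveI : Invertible (1 : Matrix (Fin r₂) (Fin r₂) ℝ) := invertibleOne
    haveI i1 : Invertible (Sg₂ - A₂ᵀ * A₂) :=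
      Matrix.invertibleOfIsUnitDet _ hPD₂.det_pos.ne'.isUnit
    haveI i1' : Invertible (Sg₂ - A₂ᵀ * ⅟(1 : Matrix (Fin r₂) (Fin r₂) ℝ) * A₂) := by
      have hEq : Sg₂ - A₂ᵀ * ⅟(1 : Matrix (Fin r₂) (Fin r₂) ℝ) * A₂ = Sg₂ - A₂ᵀ * A₂ := by
        rw [invOf_one, Matrix.mul_one]
      rw [hEq]; exact i1
    haveI := fromBlocks₁₁Invertible (1 : Matrix (Fin r₂) (Fin r₂) ℝ) A₂ A₂ᵀ Sg₂
    exact isUnit_det_of_invertible E₂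
  -- e vectors for user 1
  set d₁ := Sg₂⁻¹ *ᵥ f₂ with hd₁def
  set ew₁ : (Fin r₁ ⊕ Fin r₂) → ℝ := Sum.elim d₁ (-(Sg₁⁻¹ *ᵥ (A₁ᵀ *ᵥ d₁))) with hew₁def
  have hw₁ : E₁ *ᵥ ew₁ = Sum.elim f₂ 0 := by
    have hA : A₁ *ᵥ (Sg₁⁻¹ *ᵥ (A₁ᵀ *ᵥ d₁)) = (A₁ * Sg₁⁻¹ * A₁ᵀ) *ᵥ d₁ := by
      conv_lhs => rw [mulVec_mulVec, mulVec_mulVec]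
    have h2 : Sg₁ *ᵥ (Sg₁⁻¹ *ᵥ (A₁ᵀ *ᵥ d₁)) = A₁ᵀ *ᵥ d₁ := by
      rw [mulVec_mulVec, mul_nonsing_inv _ hdetSg₁, one_mulVec]
    have h1 : d₁ - (A₁ * Sg₁⁻¹ * A₁ᵀ) *ᵥ d₁ = f₂ := by
      rw [show d₁ - (A₁ * Sg₁⁻¹ * A₁ᵀ) *ᵥ d₁
          = ((1 : Matrix (Fin r₁) (Fin r₁) ℝ) - A₁ * Sg₁⁻¹ * A₁ᵀ) *ᵥ d₁ from by
        rw [sub_mulVec, one_mulVec], ← hRic₂, hd₁def, mulVec_mulVec,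
        mul_nonsing_inv _ hdetSg₂, one_mulVec]
    rw [hE₁def, hew₁def, fromBlocks_mulVec]
    simp only [Sum.elim_comp_inl, Sum.elim_comp_inr, one_mulVec, mulVec_neg]
    rw [hA, h2, ← sub_eq_add_neg, h1, add_neg_cancel]
  set eu₁ : (Fin r₁ ⊕ Fin r₂) → ℝ := Sum.elim v₁ 0 + (P₂*s) • ew₁ with heu₁def
  have hu₁ : E₁ *ᵥ eu₁ = Sum.elim h₁ f₁ := by
    rw [heu₁def, mulVec_add, mulVec_smul, hw₁, hE₁def, fromBlocks_mulVec]
    simp only [Sum.elim_comp_inl, Sum.elim_comp_inr]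
    rw [mulVec_zero, mulVec_zero, one_mulVec, add_zero, hf₁, add_zero, sum_elim_smul,
      sum_elim_add, smul_zero, add_zero, ← hh₁]
  -- e vectors for user 2
  set d₂ := Sg₁⁻¹ *ᵥ f₁ with hd₂def
  set ew₂ : (Fin r₂ ⊕ Fin r₁) → ℝ := Sum.elim d₂ (-(Sg₂⁻¹ *ᵥ (A₂ᵀ *ᵥ d₂))) with hew₂def
  have hw₂ : E₂ *ᵥ ew₂ = Sum.elim f₁ 0 := by
    have hA : A₂ *ᵥ (Sg₂⁻¹ *ᵥ (A₂ᵀ *ᵥ d₂)) = (A₂ * Sg₂⁻¹ * A₂ᵀ) *ᵥ d₂ := by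
      conv_lhs => rw [mulVec_mulVec, mulVec_mulVec]
    have h2 : Sg₂ *ᵥ (Sg₂⁻¹ *ᵥ (A₂ᵀ *ᵥ d₂)) = A₂ᵀ *ᵥ d₂ := by
      rw [mulVec_mulVec, mul_nonsing_inv _ hdetSg₂, one_mulVec]
    have h1 : d₂ - (A₂ * Sg₂⁻¹ * A₂ᵀ) *ᵥ d₂ = f₁ := by
      rw [show d₂ - (A₂ * Sg₂⁻¹ * A₂ᵀ) *ᵥ d₂
          = ((1 : Matrix (Fin r₂) (Fin r₂) ℝ) - A₂ * Sg₂⁻¹ * A₂ᵀ) *ᵥ d₂ from by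
        rw [sub_mulVec, one_mulVec], ← hRic₁, hd₂def, mulVec_mulVec,
        mul_nonsing_inv _ hdetSg₁, one_mulVec]
    rw [hE₂def, hew₂def, fromBlocks_mulVec]
    simp only [Sum.elim_comp_inl, Sum.elim_comp_inr, one_mulVec, mulVec_neg]
    rw [hA, h2, ← sub_eq_add_neg, h1, add_neg_cancel]
  set eu₂ : (Fin r₂ ⊕ Fin r₁) → ℝ := Sum.elim v₂ 0 + (P₁*t) • ew₂ with heu₂def
  have hu₂ : E₂ *ᵥ eu₂ = Sum.elim h₂ f₂ := by
    rw [heu₂def, mulVec_add, mulVec_smul, hw₂, hE₂def, fromBlocks_mulVec]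
    simp only [Sum.elim_comp_inl, Sum.elim_comp_inr]
    rw [mulVec_zero, mulVec_zero, one_mulVec, add_zero, hf₂, add_zero, sum_elim_smul,
      sum_elim_add, smul_zero, add_zero, ← hh₂]
  -- dot products, user 1
  have hgg₁ : (Sum.elim f₂ (0 : Fin r₂ → ℝ)) ⬝ᵥ ew₁ = g₁ := by
    rw [hew₁def, sumElim_dotProduct_sumElim, zero_dotProduct, add_zero, hg₁def, hd₁def]
  have hβ₁ : (Sum.elim f₂ (0 : Fin r₂ → ℝ)) ⬝ᵥ eu₁ = s*(1+P₂*g₁) := by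
    rw [heu₁def, dotProduct_add, dotProduct_smul, hgg₁, smul_eq_mul,
      sumElim_dotProduct_sumElim, dotProduct_zero, add_zero, ← hsdef]
    ring
  have hα₁ : (Sum.elim h₁ f₁) ⬝ᵥ eu₁ = m₁+2*P₂*s^2+P₂^2*s^2*g₁ := by
    have hcross : (Sum.elim h₁ f₁) ⬝ᵥ ew₁ = s*(1+P₂*g₁) := by
      rw [dot_symm E₁ hE₁s hu₁ hw₁, hβ₁]
    have hfirst : h₁ ⬝ᵥ v₁ = m₁ + P₂*s^2 := by
      rw [hh₁, add_dotProduct, ← hm₁def, smul_dotProduct, smul_eq_mul, ← hsdef]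
      ring
    rw [heu₁def, dotProduct_add, dotProduct_smul, hcross, smul_eq_mul,
      sumElim_dotProduct_sumElim, dotProduct_zero, add_zero, hfirst]
    ring
  -- dot products, user 2
  have hgg₂ : (Sum.elim f₁ (0 : Fin r₁ → ℝ)) ⬝ᵥ ew₂ = g₂ := by
    rw [hew₂def, sumElim_dotProduct_sumElim, zero_dotProduct, add_zero, hg₂def, hd₂def]
  have hβ₂ : (Sum.elim f₁ (0 : Fin r₁ → ℝ)) ⬝ᵥ eu₂ = t*(1+P₁*g₂) := by
    rw [heu₂def, dotProduct_add, dotProduct_smul, hgg₂, smul_eq_mul,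
      sumElim_dotProduct_sumElim, dotProduct_zero, add_zero, ← htdef]
    ring
  have hα₂ : (Sum.elim h₂ f₂) ⬝ᵥ eu₂ = m₂+2*P₁*t^2+P₁^2*t^2*g₂ := by
    have hcross : (Sum.elim h₂ f₂) ⬝ᵥ ew₂ = t*(1+P₁*g₂) := by
      rw [dot_symm E₂ hE₂s hu₂ hw₂, hβ₂]
    have hfirst : h₂ ⬝ᵥ v₂ = m₂ + P₁*t^2 := by
      rw [hh₂, add_dotProduct, ← hm₂def, smul_dotProduct, smul_eq_mul, ← htdef]
      ring
    rw [heu₂def, dotProduct_add, dotProduct_smul, hcross, smul_eq_mul,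
      sumElim_dotProduct_sumElim, dotProduct_zero, add_zero, hfirst]
    ring
  -- determinant evaluations
  have hg₁pos : ∀ Y : ℝ, 0 ≤ Y → (0:ℝ) < 1 + Y*g₁ := fun Y hY => by
    have := mul_nonneg hY hg₁0; linarith
  have hg₂pos : ∀ Y : ℝ, 0 ≤ Y → (0:ℝ) < 1 + Y*g₂ := fun Y hY => by
    have := mul_nonneg hY hg₂0; linarith
  have hD₁ : ∀ X Y : ℝ, 0 ≤ Y →
      (1 + X • vecMulVec (Sum.elim h₁ f₁) (Sum.elim h₁ f₁) *
        (fromBlocks 1 A₁ A₁ᵀ Sg₁ + Y • vecMulVec (Sum.elim f₂ (0 : Fin r₂ → ℝ))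
          (Sum.elim f₂ (0 : Fin r₂ → ℝ)))⁻¹).det
      = 1 + X*((m₁+2*P₂*s^2+P₂^2*s^2*g₁) - Y*(s*(1+P₂*g₁))^2/(1+Y*g₁)) := by
    intro X Y hY
    have hne : 1 + Y * ((Sum.elim f₂ (0 : Fin r₂ → ℝ)) ⬝ᵥ ew₁) ≠ 0 := by
      rw [hgg₁]; exact (hg₁pos Y hY).ne'
    rw [← hE₁def,
      det_formula E₁ hE₁s hdetE₁ (Sum.elim h₁ f₁) (Sum.elim f₂ (0 : Fin r₂ → ℝ))
        eu₁ ew₁ hu₁ hw₁ X Y hne, hα₁, hβ₁, hgg₁]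
  have hD₂ : ∀ X Y : ℝ, 0 ≤ X →
      (1 + Y • vecMulVec (Sum.elim h₂ f₂) (Sum.elim h₂ f₂) *
        (fromBlocks 1 A₂ A₂ᵀ Sg₂ + X • vecMulVec (Sum.elim f₁ (0 : Fin r₁ → ℝ))
          (Sum.elim f₁ (0 : Fin r₁ → ℝ)))⁻¹).det
      = 1 + Y*((m₂+2*P₁*t^2+P₁^2*t^2*g₂) - X*(t*(1+P₁*g₂))^2/(1+X*g₂)) := by
    intro X Y hX
    have hne : 1 + X * ((Sum.elim f₁ (0 : Fin r₁ → ℝ)) ⬝ᵥ ew₂) ≠ 0 := by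
      rw [hgg₂]; exact (hg₂pos X hX).ne'
    rw [← hE₂def,
      det_formula E₂ hE₂s hdetE₂ (Sum.elim h₂ f₂) (Sum.elim f₁ (0 : Fin r₁ → ℝ))
        eu₂ ew₂ hu₂ hw₂ Y X hne, hα₂, hβ₂, hgg₂]
  -- TIN determinants
  have hT₁ : (1 + P₁ • vecMulVec h₁ h₁ * (1 + P₂ • vecMulVec f₂ f₂)⁻¹).det
      = 1 + P₁*(m₁+P₂*s^2) := by
    have hone : ((1 : Matrix (Fin r₁) (Fin r₁) ℝ))ᵀ = 1 := transpose_one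
    have honeU : IsUnit (1 : Matrix (Fin r₁) (Fin r₁) ℝ).det := by
      rw [det_one]; exact isUnit_one
    have hone_u : (1 : Matrix (Fin r₁) (Fin r₁) ℝ) *ᵥ h₁ = h₁ := one_mulVec h₁
    have hone_w : (1 : Matrix (Fin r₁) (Fin r₁) ℝ) *ᵥ f₂ = f₂ := one_mulVec f₂
    have hne : 1 + P₂ * (f₂ ⬝ᵥ f₂) ≠ 0 := by rw [← hq₁def]; exact hK₂ne
    rw [det_formula 1 hone honeU h₁ f₂ h₁ f₂ hone_u hone_w P₁ P₂ hne]
    have e1 : h₁ ⬝ᵥ h₁ = m₁+2*P₂*s^2+P₂^2*s^2*q₁ := by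
      rw [hh₁]
      simp only [add_dotProduct, dotProduct_add, smul_dotProduct, dotProduct_smul,
        smul_eq_mul]
      rw [← hm₁def, ← hq₁def, ← hsdef, dotProduct_comm v₁ f₂, ← hsdef]
      ring
    have e2 : f₂ ⬝ᵥ h₁ = s*(1+P₂*q₁) := by
      rw [hh₁, dotProduct_add, dotProduct_smul, smul_eq_mul, ← hsdef, ← hq₁def]
      ring
    rw [e1, e2, ← hq₁def, resp_full m₁ q₁ s P₂ hK₂ne]
  have hT₂ : (1 + P₂ • vecMulVec h₂ h₂ * (1 + P₁ • vecMulVec f₁ f₁)⁻¹).det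
      = 1 + P₂*(m₂+P₁*t^2) := by
    have hone : ((1 : Matrix (Fin r₂) (Fin r₂) ℝ))ᵀ = 1 := transpose_one
    have honeU : IsUnit (1 : Matrix (Fin r₂) (Fin r₂) ℝ).det := by
      rw [det_one]; exact isUnit_one
    have hone_u : (1 : Matrix (Fin r₂) (Fin r₂) ℝ) *ᵥ h₂ = h₂ := one_mulVec h₂
    have hone_w : (1 : Matrix (Fin r₂) (Fin r₂) ℝ) *ᵥ f₁ = f₁ := one_mulVec f₁
    have hne : 1 + P₁ * (f₁ ⬝ᵥ f₁) ≠ 0 := by rw [← hq₂def]; exact hK₁ne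
    rw [det_formula 1 hone honeU h₂ f₁ h₂ f₁ hone_u hone_w P₂ P₁ hne]
    have e1 : h₂ ⬝ᵥ h₂ = m₂+2*P₁*t^2+P₁^2*t^2*q₂ := by
      rw [hh₂]
      simp only [add_dotProduct, dotProduct_add, smul_dotProduct, dotProduct_smul,
        smul_eq_mul]
      rw [← hm₂def, ← hq₂def, ← htdef, dotProduct_comm v₂ f₁, ← htdef]
      ring
    have e2 : f₁ ⬝ᵥ h₂ = t*(1+P₁*q₂) := by
      rw [hh₂, dotProduct_add, dotProduct_smul, smul_eq_mul, ← htdef, ← hq₂def]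
      ring
    rw [e1, e2, ← hq₂def, resp_full m₂ q₂ t P₁ hK₁ne]
  -- final assembly
  have hρ₁0 : (0:ℝ) ≤ m₁ + P₂*s^2 := by
    have := mul_nonneg hP₂.le (sq_nonneg s); linarith
  have hρ₂0 : (0:ℝ) ≤ m₂ + P₁*t^2 := by
    have := mul_nonneg hP₁.le (sq_nonneg t); linarith
  have hfull₁ : (m₁+2*P₂*s^2+P₂^2*s^2*g₁) - P₂*(s*(1+P₂*g₁))^2/(1+P₂*g₁) = m₁+P₂*s^2 :=
    resp_full m₁ g₁ s P₂ (hg₁pos P₂ hP₂.le).ne'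
  have hfull₂ : (m₂+2*P₁*t^2+P₁^2*t^2*g₂) - P₁*(t*(1+P₁*g₂))^2/(1+P₁*g₂) = m₂+P₁*t^2 :=
    resp_full m₂ g₂ t P₁ (hg₂pos P₁ hP₁.le).ne'
  have p3 : (0:ℝ) < 1 + P₁*(m₁+P₂*s^2) := by
    have := mul_nonneg hP₁.le hρ₁0; linarith
  have p4 : (0:ℝ) < 1 + P₂*(m₂+P₁*t^2) := by
    have := mul_nonneg hP₂.le hρ₂0; linarith
  constructor
  · intro S₁ hS₁ S₂ hS₂
    obtain ⟨hS₁0, hS₁P⟩ := hS₁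
    obtain ⟨hS₂0, hS₂P⟩ := hS₂
    rw [hRsu S₁ S₂, hRsu P₁ P₂, hD₁ S₁ S₂ hS₂0, hD₂ S₁ S₂ hS₁0, hD₁ P₁ P₂ hP₂.le,
      hD₂ P₁ P₂ hP₁.le, hfull₁, hfull₂]
    set a₁S := (m₁+2*P₂*s^2+P₂^2*s^2*g₁) - S₂*(s*(1+P₂*g₁))^2/(1+S₂*g₁) with ha₁S
    set a₂S := (m₂+2*P₁*t^2+P₁^2*t^2*g₂) - S₁*(t*(1+P₁*g₂))^2/(1+S₁*g₂) with ha₂S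
    have hlb₁ : m₁ + P₂*s^2 ≤ a₁S := by
      rw [ha₁S]; exact resp_lb m₁ g₁ s P₂ S₂ hg₁0 hS₂0 hS₂P
    have hlb₂ : m₂ + P₁*t^2 ≤ a₂S := by
      rw [ha₂S]; exact resp_lb m₂ g₂ t P₁ S₁ hg₂0 hS₁0 hS₁P
    have ha₁0 : 0 ≤ a₁S := le_trans hρ₁0 hlb₁
    have ha₂0 : 0 ≤ a₂S := le_trans hρ₂0 hlb₂
    have p1 : (0:ℝ) < 1 + S₁*a₁S := by
      have := mul_nonneg hS₁0 ha₁0; linarith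
    have p2 : (0:ℝ) < 1 + S₂*a₂S := by
      have := mul_nonneg hS₂0 ha₂0; linarith
    have hag₁ : g₂ ≤ a₁S := by
      have := mul_nonneg hP₂.le (sq_nonneg s); linarith
    have hag₂ : g₁ ≤ m₂ + P₁*t^2 := by
      have := mul_nonneg hP₁.le (sq_nonneg t); linarith
    have step1 : (1+S₁*a₁S)*(1+S₂*a₂S) ≤ (1+P₁*a₁S)*(1+S₂*(m₂+P₁*t^2)) := by
      have h := key_move a₁S m₂ g₂ t P₁ S₁ S₂ hg₂0 hm₂0 hag₁ hCSt hS₁0 hS₁P hS₂0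
      rw [hfull₂] at h
      rw [ha₂S]
      exact h
    have step2 : (1+P₁*a₁S)*(1+S₂*(m₂+P₁*t^2))
        ≤ (1+P₁*(m₁+P₂*s^2))*(1+P₂*(m₂+P₁*t^2)) := by
      have h := key_move (m₂+P₁*t^2) m₁ g₁ s P₂ S₂ P₁ hg₁0 hm₁0 hag₂ hCSs hS₂0 hS₂P hP₁.le
      rw [hfull₁, ← ha₁S] at h
      calc (1+P₁*a₁S)*(1+S₂*(m₂+P₁*t^2)) = (1+S₂*(m₂+P₁*t^2))*(1+P₁*a₁S) := by ring
      _ ≤ (1+P₂*(m₂+P₁*t^2))*(1+P₁*(m₁+P₂*s^2)) := h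
      _ = (1+P₁*(m₁+P₂*s^2))*(1+P₂*(m₂+P₁*t^2)) := by ring
    have hprod : (1+S₁*a₁S)*(1+S₂*a₂S) ≤ (1+P₁*(m₁+P₂*s^2))*(1+P₂*(m₂+P₁*t^2)) :=
      le_trans step1 step2
    have l1 : Real.log ((1+S₁*a₁S)*(1+S₂*a₂S))
        ≤ Real.log ((1+P₁*(m₁+P₂*s^2))*(1+P₂*(m₂+P₁*t^2))) :=
      Real.log_le_log (mul_pos p1 p2) hprod
    rw [Real.log_mul p1.ne' p2.ne', Real.log_mul p3.ne' p4.ne'] at l1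
    linarith
  · rw [hRsu P₁ P₂, hD₁ P₁ P₂ hP₂.le, hD₂ P₁ P₂ hP₁.le, hT₁, hT₂, hfull₁, hfull₂]
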